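/- Let n be an odd positive integer having no divisor congruent to 3 modulo 4, let δ be a divisor of n, and suppose there exist positive integers a, t and an odd positive integer k such that δ + k = a·(4t − 1) and k divides a·t·n. Then x₁ = a·t·n/k, x₂ = a·t·(n/δ), and x₃ = t·n are pairwise distinct positive integers satisfying 4/n = 1/x₁ + 1/x₂ + 1/x₃. -/

import Mathlib

theorem stmt_11 (n δ a t k : ℕ) (hn : 0 < n) (hodd : Odd n)
    (hnodiv : ∀ m : ℕ, m ∣ n → m % 4 ≠ 3)
    (hδ : δ ∣ n) (ha : 0 < a) (ht : 0 < t) (hk : 0 < k) (hkodd : Odd k)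
    (hsum : δ + k = a * (4 * t - 1)) (hkdvd : k ∣ a * t * n) :
    0 < a * t * n / k ∧ 0 < a * t * (n / δ) ∧ 0 < t * n ∧
    a * t * n / k ≠ a * t * (n / δ) ∧
    a * t * (n / δ) ≠ t * n ∧
    a * t * n / k ≠ t * n ∧
    (4 : ℚ) / n = 1 / (a * t * n / k : ℕ) + 1 / (a * t * (n / δ) : ℕ) + 1 / (t * n : ℕ) := by
  have hδpos : 0 < δ := Nat.pos_of_dvd_of_pos hδ hn
  have hn2 : n % 2 = 1 := Nat.odd_iff.mp hodd
  have hk2 : k % 2 = 1 := Nat.odd_iff.mp hkodd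
  have hδodd : δ % 2 = 1 := by
    rcases Nat.even_or_odd δ with he | ho
    · exfalso
      have : 2 ∣ n := dvd_trans he.two_dvd hδ
      omega
    · exact Nat.odd_iff.mp ho
  have hN : 0 < a * t * n := by positivity
  have hδN : δ ∣ a * t * n := Dvd.dvd.mul_left hδ (a * t)
  have hmuld : a * t * (n / δ) = a * t * n / δ := (Nat.mul_div_assoc _ hδ).symm
  -- key cancellation identity
  have hkey : δ + k + a = a * (4 * t) := by
    have h1 : a * (4 * t) = a * (4 * t - 1) + a * 1 := by
      rw [← Nat.mul_add]; congr 1; omega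
    omega
  have hkne : k ≠ δ := by
    intro h
    have h2 : (4 * t - 1) ∣ 2 * δ := ⟨a, by rw [Nat.mul_comm (4 * t - 1) a]; omega⟩
    have hcop : Nat.Coprime (4 * t - 1) 2 := by
      rw [Nat.coprime_comm]
      exact (Nat.prime_two.coprime_iff_not_dvd).mpr (by omega)
    have h3 : (4 * t - 1) ∣ δ := hcop.dvd_of_dvd_mul_left h2
    exact hnodiv (4 * t - 1) (h3.trans hδ) (by omega)
  have heven : a * (4 * t) = 2 * (a * (2 * t)) := by ring
  have haδ : a ≠ δ := by intro h; omega
  have hak : a ≠ k := by intro h; omega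
  refine ⟨Nat.div_pos (Nat.le_of_dvd hN hkdvd) hk, ?_, by positivity, ?_, ?_, ?_, ?_⟩
  · rw [hmuld]; exact Nat.div_pos (Nat.le_of_dvd hN hδN) hδpos
  · rw [hmuld]
    intro h
    apply hkne
    have := Nat.div_div_self hkdvd hN.ne'
    rw [h, Nat.div_div_self hδN hN.ne'] at this
    omega
  · intro h
    apply haδ
    have h2 : a * t * n = δ * (t * n) := by
      have := congrArg (· * δ) h
      rw [Nat.mul_assoc, Nat.div_mul_cancel hδ] at this
      linarith [this]
    have : a * (t * n) = δ * (t * n) := by linarith [h2]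
    exact Nat.eq_of_mul_eq_mul_right (by positivity) this
  · intro h
    apply hak
    have h2 : a * t * n = t * n * k := (Nat.div_eq_iff_eq_mul_left hk hkdvd).mp h
    have : a * (t * n) = k * (t * n) := by linarith [h2]
    exact Nat.eq_of_mul_eq_mul_right (by positivity) this
  · have hnq : (n : ℚ) ≠ 0 := by positivity
    have hkq : (k : ℚ) ≠ 0 := by positivity
    have hδq : (δ : ℚ) ≠ 0 := by positivity
    have e1 : ((a * t * n / k : ℕ) : ℚ) = (a : ℚ) * t * n / k := by
      rw [Nat.cast_div hkdvd hkq]; push_cast; ring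
    have e2 : ((a * t * (n / δ) : ℕ) : ℚ) = (a : ℚ) * t * (n / δ) := by
      push_cast [Nat.cast_div hδ hδq]; ring
    have hsq : (δ : ℚ) + k + a = a * (4 * t) := by exact_mod_cast hkey
    rw [e1, e2]
    push_cast
    have htq : (t : ℚ) ≠ 0 := by positivity
    have haq : (a : ℚ) ≠ 0 := by positivity
    field_simp
    linear_combination (-1 : ℚ) * hsq
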